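/- Let {∼_u}_{u∈D} be equivalence relations on A* satisfying WSC (if α∼_u β and α∼_{dom(a)} β then αa ∼_u βa). Then the relations satisfy DLR (if α ⊨ dom(a) ↛ u then αa ∼_u α) if and only if they satisfy DLR' (if there exists β with α∼_u β, α∼_{dom(a)} β, and β ⊨ dom(a) ↛ u, then αa ∼_u α). -/
import Mathlib


open Classical

/-- Binary trees over actions, values of the `ta` purge functions. -/
inductive TATree (A : Type) : Type where
  | eps : TATree A
  | node : TATree A → TATree A → A → TATree A

/-- Run a deterministic system along a trace (newest action at the head of the list). -/
def runL {S A : Type} (step : S → A → S) (s0 : S) : List A → S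
  | [] => s0
  | a :: α => step (runL step s0 α) a

/-- The permissive purge function `ta^◇` for a dynamic policy `P`. -/
noncomputable def taD {D A : Type} (dm : A → D) (P : List A → D → D → Prop) :
    List A → D → TATree A
  | [], _ => TATree.eps
  | a :: α, u =>
    if P α (dm a) u then TATree.node (taD dm P α u) (taD dm P α (dm a)) a
    else taD dm P α u

/-- The unwinding relations: smallest family of equivalence relations on traces
satisfying WSC and DLR with respect to the dynamic policy `P`. -/
inductive Unw {D A : Type} (dm : A → D) (P : List A → D → D → Prop) :
    D → List A → List A → Prop where
  | refl (u : D) (α : List A) : Unw dm P u α α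
  | symm {u : D} {α β : List A} : Unw dm P u α β → Unw dm P u β α
  | trans {u : D} {α β γ : List A} : Unw dm P u α β → Unw dm P u β γ → Unw dm P u α γ
  | dlr (u : D) (α : List A) (a : A) : ¬ P α (dm a) u → Unw dm P u (a :: α) α
  | wsc (u : D) {α β : List A} (a : A) :
      Unw dm P u α β → Unw dm P (dm a) α β → Unw dm P u (a :: α) (a :: β)

/-- The prohibitive purge function `ta^□`, whose condition is distributed knowledge
of the policy edge, interpreted over the Kripke structure given by the unwinding relations. -/
noncomputable def taB {D A : Type} (dm : A → D) (P : List A → D → D → Prop) :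
    List A → D → TATree A
  | [], _ => TATree.eps
  | a :: α, u =>
    if (∀ β, Unw dm P u α β → Unw dm P (dm a) α β → P β (dm a) u) then
      TATree.node (taB dm P α u) (taB dm P α (dm a)) a
    else taB dm P α u

/-- in the presence of WSC, the conditions DLR and DLR' are equivalent. -/
theorem statement_1 {D A : Type} (dm : A → D) (P : List A → D → D → Prop)
    (R : D → List A → List A → Prop)
    (hequiv : ∀ u, Equivalence (R u))
    (hwsc : ∀ u (α β : List A) (a : A), R u α β → R (dm a) α β → R u (a :: α) (a :: β)) :
    (∀ u (α : List A) (a : A), ¬ P α (dm a) u → R u (a :: α) α) ↔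
    (∀ u (α : List A) (a : A),
        (∃ β, R u α β ∧ R (dm a) α β ∧ ¬ P β (dm a) u) → R u (a :: α) α) := by
  constructor
  · rintro h u α a ⟨β, hub, hdb, hnp⟩
    exact (hequiv u).trans (hwsc u α β a hub hdb)
      ((hequiv u).trans (h u β a hnp) ((hequiv u).symm hub))
  · intro h u α a hnp
    exact h u α a ⟨α, (hequiv u).refl α, (hequiv (dm a)).refl α, hnp⟩
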